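/- Uniform-in-time energy bound: let (x_i, v_i), i = 1, …, n, be a smooth solution of the controlled Cucker-Smale system on [0, T]. Define E(x, v) := (1/(4n))∑_{i,j=1}^n |v_i − v_j|² + E₂(x), where E₂(x) := (M/2)∑_{i=2}^n ∫₀^{|x_{i−1} − x_i − z_{i−1}|²} φ(r) dr, and set E₀ := E(x(0), v(0)). Then E(x(t), v(t)) ≤ E₀ for all 0 ≤ t ≤ T, and in particular max_{1 ≤ i,j ≤ n} |v_i(t) − v_j(t)| ≤ 2√(n E₀). -/

import Mathlib

open scoped BigOperators
open Filter MeasureTheory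
open scoped RealInnerProductSpace

noncomputable section

/-- Singular communication weight ψ(r) = r^{-α}. -/
def psiCS (α r : ℝ) : ℝ := r ^ (-α)

/-- Regular communication weight φ(r) = (1+r)^{-β}. -/
def phiCS (β r : ℝ) : ℝ := (1 + r) ^ (-β)

/-- The decentralized control u_i (agents indexed 1,…,n): for 2 ≤ i ≤ n-1,
`u_i = φ(|x_{i-1}-x_i-z_{i-1}|²)(x_{i-1}-x_i-z_{i-1}) - φ(|x_i-x_{i+1}-z_i|²)(x_i-x_{i+1}-z_i)`,
with only the second term for i = 1 and only the first term for i = n. -/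
def uCS {E : Type*} [NormedAddCommGroup E] [NormedSpace ℝ E]
    (n : ℕ) (φ : ℝ → ℝ) (z x : ℕ → E) (i : ℕ) : E :=
  (if 2 ≤ i then φ (‖x (i-1) - x i - z (i-1)‖ ^ 2) • (x (i-1) - x i - z (i-1)) else 0)
    - (if i + 1 ≤ n then φ (‖x i - x (i+1) - z i‖ ^ 2) • (x i - x (i+1) - z i) else 0)

/-- (x, v) is a solution of the controlled Cucker–Smale system
`x_i' = v_i`, `v_i' = (K/n) ∑_{j≠i} ψ(r_{ij})(v_j - v_i) + M u_i` on the time set S. -/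
def IsCSSol {E : Type*} [NormedAddCommGroup E] [NormedSpace ℝ E]
    (n : ℕ) (K M α β : ℝ) (z : ℕ → E) (x v : ℕ → ℝ → E) (S : Set ℝ) : Prop :=
  ∀ i ∈ Finset.Icc 1 n, ∀ t ∈ S,
    HasDerivWithinAt (x i) (v i t) S t ∧
    HasDerivWithinAt (v i)
      ((K / n) • ∑ j ∈ (Finset.Icc 1 n).erase i,
          psiCS α ‖x j t - x i t‖ • (v j t - v i t)
        + M • uCS n (phiCS β) z (fun k => x k t) i) S t

/-- Potential energy E₂(x) = (M/2) ∑_{i=2}^n ∫₀^{|x_{i-1}-x_i-z_{i-1}|²} φ(r) dr. -/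
def E2CS {E : Type*} [NormedAddCommGroup E] [NormedSpace ℝ E]
    (n : ℕ) (M β : ℝ) (z x : ℕ → E) : ℝ :=
  (M / 2) * ∑ i ∈ Finset.Icc 2 n, ∫ r in (0:ℝ)..(‖x (i-1) - x i - z (i-1)‖ ^ 2), phiCS β r

/-- Kinetic energy E₁(v) = (1/2) ∑ᵢ |vᵢ|². -/
def E1CS {E : Type*} [NormedAddCommGroup E] [NormedSpace ℝ E]
    (n : ℕ) (v : ℕ → E) : ℝ :=
  (1 / 2) * ∑ i ∈ Finset.Icc 1 n, ‖v i‖ ^ 2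

/-- Dissipation D(x,v) = (K/(2n)) ∑_{i≠j} ψ(r_{ij}) |v_i - v_j|². -/
def DCS {E : Type*} [NormedAddCommGroup E] [NormedSpace ℝ E]
    (n : ℕ) (K α : ℝ) (x v : ℕ → E) : ℝ :=
  (K / (2 * n)) * ∑ i ∈ Finset.Icc 1 n, ∑ j ∈ (Finset.Icc 1 n).erase i,
    psiCS α ‖x j - x i‖ * ‖v i - v j‖ ^ 2

/-- Velocity fluctuation (1/(4n)) ∑_{i,j} |v_i - v_j|². -/
def VflCS {E : Type*} [NormedAddCommGroup E] [NormedSpace ℝ E]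
    (n : ℕ) (v : ℕ → E) : ℝ :=
  (1 / (4 * n)) * ∑ i ∈ Finset.Icc 1 n, ∑ j ∈ Finset.Icc 1 n, ‖v i - v j‖ ^ 2

section Aux

variable {E : Type*} [NormedAddCommGroup E] [InnerProductSpace ℝ E]

lemma sum_erase_swap' {M : Type*} [AddCommMonoid M] (s : Finset ℕ) (f : ℕ → ℕ → M) :
    ∑ i ∈ s, ∑ j ∈ s.erase i, f i j = ∑ i ∈ s, ∑ j ∈ s.erase i, f j i := by
  rw [Finset.sum_comm' (s' := fun j => s.erase j) (t' := s)]
  intro i j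
  simp only [Finset.mem_erase]
  tauto

lemma sum_erase_antisymm' (s : Finset ℕ) (f : ℕ → ℕ → E)
    (hf : ∀ i ∈ s, ∀ j ∈ s, f j i = - f i j) :
    ∑ i ∈ s, ∑ j ∈ s.erase i, f i j = 0 := by
  have h := sum_erase_swap' s f
  have h2 : ∑ i ∈ s, ∑ j ∈ s.erase i, f j i = - ∑ i ∈ s, ∑ j ∈ s.erase i, f i j := by
    rw [← Finset.sum_neg_distrib]
    refine Finset.sum_congr rfl fun i hi => ?_
    rw [← Finset.sum_neg_distrib]
    exact Finset.sum_congr rfl fun j hj => hf i hi j (Finset.mem_of_mem_erase hj)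
  have h3 : (2:ℝ) • (∑ i ∈ s, ∑ j ∈ s.erase i, f i j) = 0 := by
    rw [two_smul]; nth_rewrite 2 [h]; rw [h2]; abel
  simpa [smul_eq_zero] using h3

lemma expand_double_inner' (s : Finset ℕ) (V A : ℕ → E) :
    ∑ i ∈ s, ∑ j ∈ s, ⟪V i - V j, A i - A j⟫ =
      2 * s.card * ∑ i ∈ s, ⟪V i, A i⟫ - 2 * ⟪∑ i ∈ s, V i, ∑ i ∈ s, A i⟫ := by
  have key : ∑ i ∈ s, ∑ j ∈ s, ⟪V i, A j⟫ = ⟪∑ i ∈ s, V i, ∑ i ∈ s, A i⟫ := by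
    rw [sum_inner]
    exact Finset.sum_congr rfl fun i _ => (inner_sum s A (V i)).symm
  have key2 : ∑ i ∈ s, ∑ j ∈ s, ⟪V j, A i⟫ = ⟪∑ i ∈ s, V i, ∑ i ∈ s, A i⟫ := by
    rw [Finset.sum_comm]; exact key
  simp only [inner_sub_left, inner_sub_right, Finset.sum_sub_distrib, Finset.sum_const,
    nsmul_eq_mul]
  rw [key, key2, ← Finset.mul_sum]
  ring

lemma sum_Icc_shift' {M : Type*} [AddCommMonoid M] (n : ℕ) (g : ℕ → M) :
    ∑ i ∈ Finset.Icc 2 n, g i = ∑ k ∈ Finset.Icc 1 (n-1), g (k+1) := by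
  refine Finset.sum_nbij' (fun a => a - 1) (fun a => a + 1) ?_ ?_ ?_ ?_ ?_ <;>
      simp only [Finset.mem_Icc] <;> intro a ha
  · omega
  · omega
  · omega
  · omega
  · congr 1; omega

lemma filter_two_le' (n : ℕ) : (Finset.Icc 1 n).filter (fun i => 2 ≤ i) = Finset.Icc 2 n := by
  ext i; simp only [Finset.mem_filter, Finset.mem_Icc]; omega

lemma filter_succ_le' (n : ℕ) (hn : 1 ≤ n) :
    (Finset.Icc 1 n).filter (fun i => i + 1 ≤ n) = Finset.Icc 1 (n-1) := by
  ext i; simp only [Finset.mem_filter, Finset.mem_Icc]; omega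

lemma cs_deriv_nonpos (n : ℕ) (hn : 2 ≤ n) (K M α β : ℝ) (hK : 0 ≤ K) (hM : 0 ≤ M)
    (z V X : ℕ → E) :
    (1/(4*(n:ℝ))) * (∑ i ∈ Finset.Icc 1 n, ∑ j ∈ Finset.Icc 1 n,
        (⟪V i - V j, ((K / n) • ∑ k ∈ (Finset.Icc 1 n).erase i, psiCS α ‖X k - X i‖ • (V k - V i)
              + M • uCS n (phiCS β) z X i)
            - ((K / n) • ∑ k ∈ (Finset.Icc 1 n).erase j, psiCS α ‖X k - X j‖ • (V k - V j)
              + M • uCS n (phiCS β) z X j)⟫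
         + ⟪((K / n) • ∑ k ∈ (Finset.Icc 1 n).erase i, psiCS α ‖X k - X i‖ • (V k - V i)
              + M • uCS n (phiCS β) z X i)
            - ((K / n) • ∑ k ∈ (Finset.Icc 1 n).erase j, psiCS α ‖X k - X j‖ • (V k - V j)
              + M • uCS n (phiCS β) z X j), V i - V j⟫))
    + (M/2) * (∑ i ∈ Finset.Icc 2 n, phiCS β (‖X (i-1) - X i - z (i-1)‖^2) *
        (⟪X (i-1) - X i - z (i-1), V (i-1) - V i⟫ + ⟪V (i-1) - V i, X (i-1) - X i - z (i-1)⟫))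
      ≤ 0 := by
  have hn0 : (0:ℝ) < n := by positivity
  set s := Finset.Icc 1 n with hs
  set C : ℕ → E := fun i => ∑ k ∈ s.erase i, psiCS α ‖X k - X i‖ • (V k - V i) with hCdef
  set U : ℕ → E := fun i => uCS n (phiCS β) z X i with hUdef
  set A : ℕ → E := fun i => (K / n) • C i + M • U i with hAdef
  set b : ℕ → E := fun k => phiCS β (‖X k - X (k+1) - z k‖ ^ 2) • (X k - X (k+1) - z k) with hbdef
  -- sum of C vanishes
  have hC : ∑ i ∈ s, C i = 0 := by
    apply sum_erase_antisymm'
    intro i _ j _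
    rw [norm_sub_rev, ← smul_neg, neg_sub]
  -- sum of U vanishes (telescoping)
  have hU : ∑ i ∈ s, U i = 0 := by
    have h1 : ∑ i ∈ s, (if 2 ≤ i then
          phiCS β (‖X (i-1) - X i - z (i-1)‖ ^ 2) • (X (i-1) - X i - z (i-1)) else 0)
        = ∑ k ∈ Finset.Icc 1 (n-1), b k := by
      rw [← Finset.sum_filter, hs, filter_two_le', sum_Icc_shift']
      refine Finset.sum_congr rfl fun k _ => ?_
      simp only [hbdef, Nat.add_sub_cancel]
    have h2 : ∑ i ∈ s, (if i + 1 ≤ n then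
          phiCS β (‖X i - X (i+1) - z i‖ ^ 2) • (X i - X (i+1) - z i) else 0)
        = ∑ k ∈ Finset.Icc 1 (n-1), b k := by
      rw [← Finset.sum_filter, hs, filter_succ_le' n (by omega)]
    simp only [hUdef, uCS, Finset.sum_sub_distrib, h1, h2, sub_self]
  have hA : ∑ i ∈ s, A i = 0 := by
    simp only [hAdef, Finset.sum_add_distrib, ← Finset.smul_sum, hC, hU, smul_zero, add_zero]
  -- inner sums with V
  have hVU : ∑ i ∈ s, ⟪V i, U i⟫ = ∑ k ∈ Finset.Icc 1 (n-1), ⟪V (k+1) - V k, b k⟫ := by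
    have h1 : ∑ i ∈ s, (if 2 ≤ i then
          ⟪V i, phiCS β (‖X (i-1) - X i - z (i-1)‖ ^ 2) • (X (i-1) - X i - z (i-1))⟫ else 0)
        = ∑ k ∈ Finset.Icc 1 (n-1), ⟪V (k+1), b k⟫ := by
      rw [← Finset.sum_filter, hs, filter_two_le', sum_Icc_shift']
      refine Finset.sum_congr rfl fun k _ => ?_
      simp only [hbdef, Nat.add_sub_cancel]
    have h2 : ∑ i ∈ s, (if i + 1 ≤ n then
          ⟪V i, phiCS β (‖X i - X (i+1) - z i‖ ^ 2) • (X i - X (i+1) - z i)⟫ else 0)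
        = ∑ k ∈ Finset.Icc 1 (n-1), ⟪V k, b k⟫ := by
      rw [← Finset.sum_filter, hs, filter_succ_le' n (by omega)]
    calc ∑ i ∈ s, ⟪V i, U i⟫
        = ∑ i ∈ s, ((if 2 ≤ i then
            ⟪V i, phiCS β (‖X (i-1) - X i - z (i-1)‖ ^ 2) • (X (i-1) - X i - z (i-1))⟫ else 0)
          - (if i + 1 ≤ n then
            ⟪V i, phiCS β (‖X i - X (i+1) - z i‖ ^ 2) • (X i - X (i+1) - z i)⟫ else 0)) := by
          refine Finset.sum_congr rfl fun i _ => ?_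
          simp only [hUdef, uCS, inner_sub_right]
          congr 1 <;> split <;> simp
      _ = ∑ k ∈ Finset.Icc 1 (n-1), ⟪V (k+1) - V k, b k⟫ := by
          rw [Finset.sum_sub_distrib, h1, h2, ← Finset.sum_sub_distrib]
          refine Finset.sum_congr rfl fun k _ => ?_
          rw [inner_sub_left]
  -- the E2 part equals -M * that telescoped sum
  have hE2 : (M/2) * (∑ i ∈ Finset.Icc 2 n, phiCS β (‖X (i-1) - X i - z (i-1)‖^2) *
        (⟪X (i-1) - X i - z (i-1), V (i-1) - V i⟫ + ⟪V (i-1) - V i, X (i-1) - X i - z (i-1)⟫))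
      = - (M * ∑ k ∈ Finset.Icc 1 (n-1), ⟪V (k+1) - V k, b k⟫) := by
    rw [sum_Icc_shift', Finset.mul_sum, Finset.mul_sum, ← Finset.sum_neg_distrib]
    refine Finset.sum_congr rfl fun k _ => ?_
    simp only [Nat.add_sub_cancel, hbdef, real_inner_smul_right]
    rw [real_inner_comm (X k - X (k+1) - z k) (V k - V (k+1)),
      show V k - V (k+1) = -(V (k+1) - V k) from by abel]
    simp only [inner_neg_right, inner_neg_left]
    rw [real_inner_comm (X k - X (k+1) - z k)]
    ring
  -- dissipation nonpositive
  have hQ : ∑ i ∈ s, ⟪V i, C i⟫ ≤ 0 := by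
    have hswap := sum_erase_swap' s (fun i j => psiCS α ‖X j - X i‖ * ⟪V i, V j - V i⟫)
    have hexp : ∑ i ∈ s, ⟪V i, C i⟫
        = ∑ i ∈ s, ∑ j ∈ s.erase i, psiCS α ‖X j - X i‖ * ⟪V i, V j - V i⟫ := by
      refine Finset.sum_congr rfl fun i _ => ?_
      rw [hCdef]; rw [inner_sum]
      exact Finset.sum_congr rfl fun j _ => real_inner_smul_right _ _ _
    have key : (2:ℝ) * ∑ i ∈ s, ⟪V i, C i⟫
        = ∑ i ∈ s, ∑ j ∈ s.erase i,
            (- (psiCS α ‖X j - X i‖ * ‖V i - V j‖^2)) := by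
      rw [hexp, two_mul]
      nth_rewrite 2 [hswap]
      rw [← Finset.sum_add_distrib]
      refine Finset.sum_congr rfl fun i _ => ?_
      rw [← Finset.sum_add_distrib]
      refine Finset.sum_congr rfl fun j _ => ?_
      rw [norm_sub_rev (X i) (X j), ← mul_add]
      have : ⟪V i, V j - V i⟫ + ⟪V j, V i - V j⟫ = - ‖V i - V j‖^2 := by
        rw [← real_inner_self_eq_norm_sq]
        simp only [inner_sub_left, inner_sub_right]
        rw [real_inner_comm (V j) (V i)]
        ring
      rw [this]; ring
    have hnonneg : ∀ i ∈ s, ∀ j ∈ s.erase i,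
        0 ≤ psiCS α ‖X j - X i‖ * ‖V i - V j‖^2 := by
      intro i _ j _
      apply mul_nonneg (Real.rpow_nonneg (norm_nonneg _) _) (sq_nonneg _)
    have h2Q : (2:ℝ) * ∑ i ∈ s, ⟪V i, C i⟫ ≤ 0 := by
      rw [key]
      apply Finset.sum_nonpos
      intro i hi
      apply Finset.sum_nonpos
      intro j hj
      simpa using hnonneg i hi j hj
    linarith
  -- putting it together
  have hcard : (s.card : ℝ) = n := by rw [hs, Nat.card_Icc]; simp
  have hmain : ∑ i ∈ s, ∑ j ∈ s, (⟪V i - V j, A i - A j⟫ + ⟪A i - A j, V i - V j⟫)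
      = 4 * n * ∑ i ∈ s, ⟪V i, A i⟫ := by
    have h2 : ∑ i ∈ s, ∑ j ∈ s, (⟪V i - V j, A i - A j⟫ + ⟪A i - A j, V i - V j⟫)
        = 2 * ∑ i ∈ s, ∑ j ∈ s, ⟪V i - V j, A i - A j⟫ := by
      rw [Finset.mul_sum]
      refine Finset.sum_congr rfl fun i _ => ?_
      rw [Finset.mul_sum]
      refine Finset.sum_congr rfl fun j _ => ?_
      rw [real_inner_comm (A i - A j), two_mul]
    rw [h2, expand_double_inner', hA, hcard]
    simp only [inner_zero_right]
    ring
  have hVA : ∑ i ∈ s, ⟪V i, A i⟫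
      = (K / n) * ∑ i ∈ s, ⟪V i, C i⟫ + M * ∑ i ∈ s, ⟪V i, U i⟫ := by
    rw [Finset.mul_sum, Finset.mul_sum, ← Finset.sum_add_distrib]
    refine Finset.sum_congr rfl fun i _ => ?_
    simp only [hAdef, inner_add_right, real_inner_smul_right]
  rw [hmain, hE2, hVA, hVU]
  have hsimp : 1 / (4 * (n:ℝ)) * (4 * n * ((K / n) * ∑ i ∈ s, ⟪V i, C i⟫
        + M * ∑ k ∈ Finset.Icc 1 (n-1), ⟪V (k+1) - V k, b k⟫))
      = (K / n) * ∑ i ∈ s, ⟪V i, C i⟫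
        + M * ∑ k ∈ Finset.Icc 1 (n-1), ⟪V (k+1) - V k, b k⟫ := by
    field_simp
  rw [hsimp]
  have hKn : 0 ≤ K / n := by positivity
  nlinarith [mul_nonneg hKn (neg_nonneg.mpr hQ)]

lemma phiCS_contOn (β : ℝ) : ContinuousOn (phiCS β) (Set.Ioi (-1 : ℝ)) := by
  intro r hr
  have h1 : (0:ℝ) < 1 + r := by simp only [Set.mem_Ioi] at hr; linarith
  apply ContinuousWithinAt.rpow_const
  · exact (continuous_const.add continuous_id).continuousWithinAt
  · exact Or.inl (ne_of_gt h1)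

end Aux

/-- uniform-in-time energy bound
`E(x(t),v(t)) ≤ E₀` and `max_{i,j} |v_i(t) - v_j(t)| ≤ 2√(nE₀)`. -/
theorem cs_energy_bound
    {d n : ℕ} (hn : 2 ≤ n) (K M α β : ℝ) (hK : 0 ≤ K) (hM : 0 ≤ M)
    (hα : 0 < α) (hβ : 0 < β)
    (z : ℕ → EuclideanSpace ℝ (Fin d)) (x v : ℕ → ℝ → EuclideanSpace ℝ (Fin d))
    (T : ℝ) (hT : 0 < T)
    (hsol : IsCSSol n K M α β z x v (Set.Icc 0 T)) :
    ∀ t ∈ Set.Icc (0:ℝ) T,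
      VflCS n (fun i => v i t) + E2CS n M β z (fun i => x i t)
          ≤ VflCS n (fun i => v i 0) + E2CS n M β z (fun i => x i 0) ∧
      ∀ i ∈ Finset.Icc 1 n, ∀ j ∈ Finset.Icc 1 n,
        ‖v i t - v j t‖
          ≤ 2 * Real.sqrt
              (n * (VflCS n (fun i => v i 0) + E2CS n M β z (fun i => x i 0))) := by
  have hn0 : (0:ℝ) < n := by positivity
  set S := Set.Icc (0:ℝ) T with hS
  set s := Finset.Icc 1 n with hs
  set f : ℝ → ℝ := fun τ => VflCS n (fun i => v i τ) + E2CS n M β z (fun i => x i τ) with hf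
  -- nonnegativity facts
  have hE2nonneg : ∀ X : ℕ → EuclideanSpace ℝ (Fin d), 0 ≤ E2CS n M β z X := by
    intro X
    apply mul_nonneg (by linarith)
    apply Finset.sum_nonneg
    intro i _
    apply intervalIntegral.integral_nonneg (sq_nonneg _)
    intro u hu
    exact Real.rpow_nonneg (by linarith [hu.1]) _
  have hVflnonneg : ∀ w : ℕ → EuclideanSpace ℝ (Fin d), 0 ≤ VflCS n w := by
    intro w
    apply mul_nonneg (by positivity)
    exact Finset.sum_nonneg fun i _ => Finset.sum_nonneg fun j _ => sq_nonneg _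
  -- existence of a nonpositive derivative at every time
  have key : ∀ τ ∈ S, ∃ D, D ≤ 0 ∧ HasDerivWithinAt f D S τ := by
    intro τ hτ
    set A : ℕ → EuclideanSpace ℝ (Fin d) := fun i =>
      (K / n) • ∑ k ∈ s.erase i, psiCS α ‖x k τ - x i τ‖ • (v k τ - v i τ)
        + M • uCS n (phiCS β) z (fun k => x k τ) i with hA
    have hv : ∀ i ∈ s, HasDerivWithinAt (v i) (A i) S τ := fun i hi => (hsol i hi τ hτ).2
    have hx : ∀ i ∈ s, HasDerivWithinAt (x i) (v i τ) S τ := fun i hi => (hsol i hi τ hτ).1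
    refine ⟨(1/(4*(n:ℝ))) * (∑ i ∈ s, ∑ j ∈ s,
        (⟪v i τ - v j τ, A i - A j⟫ + ⟪A i - A j, v i τ - v j τ⟫))
      + (M/2) * (∑ i ∈ Finset.Icc 2 n, phiCS β (‖x (i-1) τ - x i τ - z (i-1)‖^2) *
        (⟪x (i-1) τ - x i τ - z (i-1), v (i-1) τ - v i τ⟫
          + ⟪v (i-1) τ - v i τ, x (i-1) τ - x i τ - z (i-1)⟫)), ?_, ?_⟩
    · exact cs_deriv_nonpos n hn K M α β hK hM z (fun i => v i τ) (fun i => x i τ)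
    · apply HasDerivWithinAt.add
      · simp only [VflCS, ← real_inner_self_eq_norm_sq]
        exact HasDerivWithinAt.const_mul _ (HasDerivWithinAt.fun_sum fun i hi =>
          HasDerivWithinAt.fun_sum fun j hj =>
            ((hv i hi).sub (hv j hj)).inner ℝ ((hv i hi).sub (hv j hj)))
      · simp only [E2CS]
        have Hsum : HasDerivWithinAt (fun τ' => ∑ i ∈ Finset.Icc 2 n,
            ∫ r in (0:ℝ)..(‖x (i-1) τ' - x i τ' - z (i-1)‖^2), phiCS β r)
            (∑ i ∈ Finset.Icc 2 n, phiCS β (‖x (i-1) τ - x i τ - z (i-1)‖^2) *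
              (⟪x (i-1) τ - x i τ - z (i-1), v (i-1) τ - v i τ⟫
                + ⟪v (i-1) τ - v i τ, x (i-1) τ - x i τ - z (i-1)⟫)) S τ := by
          apply HasDerivWithinAt.fun_sum
          intro i hi
          rw [Finset.mem_Icc] at hi
          have hi1 : i - 1 ∈ s := by rw [hs, Finset.mem_Icc]; omega
          have hi2 : i ∈ s := by rw [hs, Finset.mem_Icc]; omega
          have hw : HasDerivWithinAt (fun τ' => x (i-1) τ' - x i τ' - z (i-1))
              (v (i-1) τ - v i τ) S τ := ((hx _ hi1).sub (hx _ hi2)).sub_const _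
          have hg : HasDerivWithinAt (fun τ' => ‖x (i-1) τ' - x i τ' - z (i-1)‖^2)
              (⟪x (i-1) τ - x i τ - z (i-1), v (i-1) τ - v i τ⟫
                + ⟪v (i-1) τ - v i τ, x (i-1) τ - x i τ - z (i-1)⟫) S τ := by
            simpa only [real_inner_self_eq_norm_sq] using hw.inner ℝ hw
          set b := ‖x (i-1) τ - x i τ - z (i-1)‖^2 with hb
          have hb0 : 0 ≤ b := sq_nonneg _
          have hsub : Set.uIcc (0:ℝ) b ⊆ Set.Ioi (-1 : ℝ) := by
            rw [Set.uIcc_of_le hb0]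
            intro r hr
            have := hr.1
            simp only [Set.mem_Ioi]
            linarith
          have hF : HasDerivAt (fun y => ∫ r in (0:ℝ)..y, phiCS β r) (phiCS β b) b := by
            apply intervalIntegral.integral_hasDerivAt_right
            · exact ((phiCS_contOn β).mono hsub).intervalIntegrable
            · exact ContinuousOn.stronglyMeasurableAtFilter isOpen_Ioi (phiCS_contOn β) b
                (by simp only [Set.mem_Ioi]; linarith)
            · exact (phiCS_contOn β).continuousAt (Ioi_mem_nhds (show (-1:ℝ) < b by linarith))
          have := HasDerivAt.comp_hasDerivWithinAt (𝕜 := ℝ) τ hF hg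
          exact this
        exact Hsum.const_mul (M/2)
  -- antitonicity of the energy
  have hmono : AntitoneOn f S := by
    apply antitoneOn_of_deriv_nonpos (convex_Icc 0 T)
    · intro τ hτ
      exact ((key τ hτ).choose_spec.2).continuousWithinAt
    · intro τ hτ
      rw [interior_Icc] at hτ
      obtain ⟨D, hD, hder⟩ := key τ (Set.Ioo_subset_Icc_self hτ)
      exact (hder.hasDerivAt (Icc_mem_nhds hτ.1 hτ.2)).differentiableAt.differentiableWithinAt
    · intro τ hτ
      rw [interior_Icc] at hτ
      obtain ⟨D, hD, hder⟩ := key τ (Set.Ioo_subset_Icc_self hτ)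
      rw [(hder.hasDerivAt (Icc_mem_nhds hτ.1 hτ.2)).deriv]
      exact hD
  intro t ht
  have h0 : (0:ℝ) ∈ S := Set.mem_Icc.mpr ⟨le_refl 0, hT.le⟩
  have hEt : f t ≤ f 0 := hmono h0 ht ht.1
  refine ⟨hEt, ?_⟩
  intro i hi j hj
  set E0 := VflCS n (fun i => v i 0) + E2CS n M β z (fun i => x i 0) with hE0def
  have hftE0 : f t ≤ E0 := hEt
  have hft0 : 0 ≤ f t := add_nonneg (hVflnonneg _) (hE2nonneg _)
  have hE0nonneg : 0 ≤ E0 := le_trans hft0 hftE0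
  -- single term bound
  have hterm : ‖v i t - v j t‖^2 ≤
      ∑ i' ∈ s, ∑ j' ∈ s, ‖v i' t - v j' t‖^2 := by
    calc ‖v i t - v j t‖^2 ≤ ∑ j' ∈ s, ‖v i t - v j' t‖^2 :=
          Finset.single_le_sum (f := fun j' => ‖v i t - v j' t‖^2) (fun j' _ => sq_nonneg _) hj
      _ ≤ ∑ i' ∈ s, ∑ j' ∈ s, ‖v i' t - v j' t‖^2 :=
          Finset.single_le_sum (f := fun i' => ∑ j' ∈ s, ‖v i' t - v j' t‖^2)
            (fun i' _ => Finset.sum_nonneg fun j' _ => sq_nonneg _) hi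
  have hsum_eq : ∑ i' ∈ s, ∑ j' ∈ s, ‖v i' t - v j' t‖^2
      = (4 * n) * VflCS n (fun i => v i t) := by
    rw [VflCS, ← mul_assoc, mul_one_div, div_self (by positivity : (4*(n:ℝ)) ≠ 0), one_mul]
  have hsq : ‖v i t - v j t‖^2 ≤ 4 * (n * E0) := by
    have h1 : VflCS n (fun i => v i t) ≤ E0 :=
      le_trans (le_add_of_nonneg_right (hE2nonneg _)) hftE0
    calc ‖v i t - v j t‖^2 ≤ (4 * n) * VflCS n (fun i => v i t) := by
          rw [← hsum_eq]; exact hterm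
      _ ≤ 4 * (n * E0) := by nlinarith
  have hsqrt4 : Real.sqrt (4 * (n * E0)) = 2 * Real.sqrt (n * E0) := by
    rw [Real.sqrt_mul (by norm_num : (0:ℝ) ≤ 4),
      show (4:ℝ) = 2^2 by norm_num, Real.sqrt_sq (by norm_num : (0:ℝ) ≤ 2)]
  rw [← hsqrt4]
  exact (Real.le_sqrt (norm_nonneg _) (by positivity)).mpr hsq
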